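/- Let k ≥ 2 be fixed and A ⊆ 𝓜_k a Borel set. Let μ_{k,n} be the law of the Gram matrix of k independent uniform points on S_{n-1}, which has density f_{k,n}(M) = det(M)^{(n-k-1)/2} Γ(n/2)^k Γ_k(n/2)^{-1} with respect to λ_k on 𝓜_k. Then lim_{n→∞} n^{-1} ln(μ_{k,n}(A)) = (1/2) ln ‖1_A · det‖_∞, where ‖·‖_∞ is the essential supremum with respect to λ_k. -/

import Mathlib

open MeasureTheory Filter
open scoped Classical

noncomputable def multivariateGamma (k : ℕ) (a : ℝ) : ℝ :=
  Real.pi ^ ((k * (k - 1) : ℝ) / 4) *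
    ∏ j ∈ Finset.range k, Real.Gamma (a + (1 - ((j : ℝ) + 1)) / 2)

def toSymMat (k : ℕ) (y : {p : Fin k × Fin k // p.1 < p.2} → ℝ) :
    Matrix (Fin k) (Fin k) ℝ :=
  Matrix.of fun i j =>
    if h : i < j then y ⟨(i, j), h⟩
    else if h' : j < i then y ⟨(j, i), h'⟩
    else 1

instance matrixMeasurableSpace (k : ℕ) :
    MeasurableSpace (Matrix (Fin k) (Fin k) ℝ) :=
  inferInstanceAs (MeasurableSpace (Fin k → Fin k → ℝ))

/-- Lebesgue measure `λ_k` on symmetric `k×k` matrices with unit diagonal. -/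
noncomputable def lambdaMeasure (k : ℕ) : Measure (Matrix (Fin k) (Fin k) ℝ) :=
  Measure.map (toSymMat k) volume

/-- The elliptope `𝓜_k`. -/
def elliptope (k : ℕ) : Set (Matrix (Fin k) (Fin k) ℝ) :=
  {M | M.PosSemidef ∧ ∀ i, M i i = 1}

/-- `μ_{k,n}`: the law of the Gram matrix of `k` independent uniform points on
`S_{n-1}`, given via its density `f_{k,n}` with respect to `λ_k`. -/
noncomputable def muMeasure (k n : ℕ) : Measure (Matrix (Fin k) (Fin k) ℝ) :=
  (lambdaMeasure k).withDensity fun M =>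
    ENNReal.ofReal
      (if M ∈ elliptope k then
        M.det ^ (((n : ℝ) - k - 1) / 2) *
          Real.Gamma ((n : ℝ) / 2) ^ k / multivariateGamma k ((n : ℝ) / 2)
      else 0)

lemma measurable_entry (k : ℕ) (i j : Fin k) :
    Measurable fun M : Matrix (Fin k) (Fin k) ℝ => M i j :=
  (measurable_pi_apply j).comp (measurable_pi_apply i)

lemma measurable_toSymMat (k : ℕ) : Measurable (toSymMat k) := by
  apply measurable_pi_lambda
  intro i
  apply measurable_pi_lambda
  intro j
  unfold toSymMat
  simp only [Matrix.of_apply]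
  split_ifs
  · exact measurable_pi_apply _
  · exact measurable_pi_apply _
  · exact measurable_const

lemma measurable_det (k : ℕ) :
    Measurable fun M : Matrix (Fin k) (Fin k) ℝ => M.det := by
  simp_rw [Matrix.det_apply']
  refine Finset.measurable_sum _ fun σ _ => Measurable.const_mul ?_ _
  exact Finset.measurable_prod _ fun i _ => measurable_entry k (σ i) i

section MeasureFacts

variable {k : ℕ} {A : Set (Matrix (Fin k) (Fin k) ℝ)}

lemma elliptope_det_nonneg {M : Matrix (Fin k) (Fin k) ℝ}
    (hM : M ∈ elliptope k) : 0 ≤ M.det := by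
  rw [hM.1.1.det_eq_prod_eigenvalues]
  exact Finset.prod_nonneg fun i _ => hM.1.eigenvalues_nonneg i

lemma elliptope_entry_abs_le {M : Matrix (Fin k) (Fin k) ℝ}
    (hM : M ∈ elliptope k) (i j : Fin k) : |M i j| ≤ 1 := by
  rcases eq_or_ne i j with rfl | hij
  · rw [hM.2 i]; simp
  · have hsub : (M.submatrix ![i, j] ![i, j]).PosSemidef := hM.1.submatrix _
    have hdet : 0 ≤ (M.submatrix ![i, j] ![i, j]).det := by
      rw [hsub.1.det_eq_prod_eigenvalues]
      exact Finset.prod_nonneg fun t _ => hsub.eigenvalues_nonneg t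
    rw [Matrix.det_fin_two] at hdet
    simp only [Matrix.submatrix_apply] at hdet
    have hji : M j i = M i j := by
      have := hM.1.1
      rw [Matrix.IsHermitian] at this
      conv_lhs => rw [← this]
      simp [Matrix.conjTranspose_apply]
    simp only [Matrix.cons_val_zero, Matrix.cons_val_one, Matrix.head_cons,
      hM.2 i, hM.2 j, hji] at hdet
    have h2 : (M i j) ^ 2 ≤ 1 := by nlinarith
    exact (sq_le_one_iff_abs_le_one _).1 h2

lemma elliptope_det_le {M : Matrix (Fin k) (Fin k) ℝ}
    (hM : M ∈ elliptope k) : M.det ≤ (k.factorial : ℝ) := by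
  have h := Matrix.det_le (A := M) (abv := AbsoluteValue.abs)
    (x := (1:ℝ)) (fun i j => elliptope_entry_abs_le hM i j)
  simp only [AbsoluteValue.abs_apply, Fintype.card_fin, one_pow, smul_eq_mul, mul_one] at h
  calc M.det ≤ |M.det| := le_abs_self _
    _ ≤ _ := by rw [nsmul_eq_mul, mul_one] at h; exact h

lemma lambda_apply (hA : MeasurableSet A) :
    lambdaMeasure k A = volume (toSymMat k ⁻¹' A) :=
  Measure.map_apply (measurable_toSymMat k) hA

lemma lambda_fin (hA : MeasurableSet A) (hAk : A ⊆ elliptope k) :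
    lambdaMeasure k A ≠ ⊤ := by
  rw [lambda_apply hA]
  have hsub : toSymMat k ⁻¹' A ⊆
      Set.pi Set.univ (fun _ : {p : Fin k × Fin k // p.1 < p.2} => Set.Icc (-1:ℝ) 1) := by
    intro y hy p _
    have hmem : toSymMat k y ∈ elliptope k := hAk hy
    have := elliptope_entry_abs_le hmem p.1.1 p.1.2
    have hentry : toSymMat k y p.1.1 p.1.2 = y ⟨(p.1.1, p.1.2), p.2⟩ := by
      unfold toSymMat
      simp only [Matrix.of_apply]
      rw [dif_pos p.2]
    rw [hentry] at this
    rw [Set.mem_Icc]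
    constructor <;> [linarith [neg_abs_le (y ⟨(p.1.1, p.1.2), p.2⟩)];
      exact le_trans (le_abs_self _) (by simpa using this)]
  refine ne_top_of_le_ne_top ?_ (measure_mono hsub)
  rw [volume_pi_pi]
  exact ENNReal.prod_ne_top fun _ _ => by simp [Real.volume_Icc]
  
lemma lambda_neZero (hk : 2 ≤ k) : lambdaMeasure k ≠ 0 := by
  intro h
  have h1 : lambdaMeasure k Set.univ = 0 := by rw [h]; rfl
  rw [lambda_apply MeasurableSet.univ, Set.preimage_univ] at h1
  have : volume (Set.univ : Set ({p : Fin k × Fin k // p.1 < p.2} → ℝ)) = ⊤ := by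
    haveI : Nonempty {p : Fin k × Fin k // p.1 < p.2} := by
      refine ⟨⟨(⟨0, by omega⟩, ⟨1, by omega⟩), ?_⟩⟩
      exact Fin.mk_lt_mk.2 (by omega)
    rw [← Set.pi_univ Set.univ, volume_pi_pi]
    simp [Real.volume_univ, Finset.prod_const]
  rw [this] at h1
  simp at h1

end MeasureFacts

lemma Gamma_two : Real.Gamma 2 = 1 := by
  rw [show (2:ℝ) = 1 + 1 by norm_num, Real.Gamma_add_one one_ne_zero,
    Real.Gamma_one, one_mul]

lemma log_Gamma_nonneg {y : ℝ} (hy : 2 ≤ y) : 0 ≤ Real.log (Real.Gamma y) := by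
  rcases eq_or_lt_of_le hy with rfl | hlt
  · simp [Gamma_two]
  have hconv := Real.convexOn_log_Gamma
  set t : ℝ := (y - 2) / (y - 1) with ht
  have hy1 : (0:ℝ) < y - 1 := by linarith
  have ht0 : 0 ≤ t := div_nonneg (by linarith) hy1.le
  have ht1 : 0 ≤ 1 - t := by
    rw [sub_nonneg, ht, div_le_one hy1]; linarith
  have hsum : t + (1 - t) = 1 := by ring
  have hcomb : t • (1:ℝ) + (1 - t) • y = 2 := by
    rw [smul_eq_mul, smul_eq_mul, ht]; linear_combination -(div_mul_cancel₀ (y - 2) hy1.ne')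
  have h2 := hconv.2 (Set.mem_Ioi.2 one_pos) (Set.mem_Ioi.2 (by linarith : (0:ℝ) < y))
    ht0 ht1 hsum
  rw [hcomb] at h2
  simp only [Function.comp_apply, Real.Gamma_one, Real.log_one, smul_eq_mul,
    mul_zero, zero_add, Gamma_two] at h2
  have h1t : 0 < 1 - t := by
    rw [sub_pos, ht, div_lt_one hy1]; linarith
  nlinarith

lemma gamma_mono {x y : ℝ} (hx : 2 ≤ x) (hxy : x ≤ y) :
    Real.Gamma x ≤ Real.Gamma y := by
  rcases eq_or_lt_of_le hxy with rfl | hlt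
  · exact le_refl _
  have hconv := Real.convexOn_log_Gamma
  have hx0 : (0:ℝ) < x := by linarith
  have hy0 : (0:ℝ) < y := by linarith
  have hy1 : (0:ℝ) < y - 1 := by linarith
  set t : ℝ := (y - x) / (y - 1) with ht
  have ht0 : 0 ≤ t := div_nonneg (by linarith) hy1.le
  have ht1 : 0 ≤ 1 - t := by
    rw [sub_nonneg, ht, div_le_one hy1]; linarith
  have hsum : t + (1 - t) = 1 := by ring
  have hcomb : t • (1:ℝ) + (1 - t) • y = x := by
    rw [smul_eq_mul, smul_eq_mul, ht]; linear_combination -(div_mul_cancel₀ (y - x) hy1.ne')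
  have h2 := hconv.2 (Set.mem_Ioi.2 one_pos) (Set.mem_Ioi.2 hy0) ht0 ht1 hsum
  rw [hcomb] at h2
  simp only [Function.comp_apply, Real.Gamma_one, Real.log_one, smul_eq_mul,
    mul_zero, zero_add] at h2
  have hfy : 0 ≤ Real.log (Real.Gamma y) := log_Gamma_nonneg (by linarith)
  have hlog : Real.log (Real.Gamma x) ≤ Real.log (Real.Gamma y) := by nlinarith
  calc Real.Gamma x = Real.exp (Real.log (Real.Gamma x)) :=
        (Real.exp_log (Real.Gamma_pos_of_pos hx0)).symm
    _ ≤ Real.exp (Real.log (Real.Gamma y)) := Real.exp_le_exp.2 hlog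
    _ = Real.Gamma y := Real.exp_log (Real.Gamma_pos_of_pos hy0)

lemma Gamma_add_nat {x : ℝ} (hx : 0 < x) (m : ℕ) :
    Real.Gamma (x + m) = Real.Gamma x * ∏ i ∈ Finset.range m, (x + i) := by
  induction m with
  | zero => simp
  | succ m ih =>
    have hxm : x + m ≠ 0 := by positivity
    have : (x + (m+1) : ℝ) = (x + m) + 1 := by push_cast; ring
    rw [show ((m+1 : ℕ) : ℝ) = (m : ℝ) + 1 by push_cast; ring]
    rw [show x + ((m:ℝ)+1) = (x + m) + 1 by ring, Real.Gamma_add_one hxm, ih,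
      Finset.prod_range_succ]
    ring

lemma gterm_eq (x : ℝ) (j : ℕ) : x/2 + (1 - ((j:ℝ)+1))/2 = (x - j)/2 := by ring

lemma gpart_lower (k : ℕ) {x : ℝ} (hx : 2*k + 4 ≤ x) :
    ∏ j ∈ Finset.range k, Real.Gamma (x/2 + (1 - ((j:ℝ)+1))/2) ≤ Real.Gamma (x/2)^k := by
  have hk0 : (0:ℝ) ≤ k := Nat.cast_nonneg k
  rw [show Real.Gamma (x/2)^k = ∏ _j ∈ Finset.range k, Real.Gamma (x/2) by
    rw [Finset.prod_const, Finset.card_range]]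
  refine Finset.prod_le_prod (fun j _ => ?_) (fun j hj => ?_)
  · exact (Real.Gamma_pos_of_pos (by
      rw [gterm_eq]
      have : (j:ℝ) ≤ k := Nat.cast_le.2 (Finset.mem_range.1 ‹j ∈ Finset.range k›).le
      linarith)).le
  · rw [gterm_eq]
    have hjk : (j:ℝ) ≤ k := Nat.cast_le.2 (Finset.mem_range.1 hj).le
    have hj0 : (0:ℝ) ≤ j := Nat.cast_nonneg j
    exact gamma_mono (by linarith) (by linarith)

lemma gpart_upper (k : ℕ) {x : ℝ} (hx : 2*k + 4 ≤ x) :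
    Real.Gamma (x/2)^k ≤
      (∏ j ∈ Finset.range k, Real.Gamma (x/2 + (1 - ((j:ℝ)+1))/2)) * x^(k*k) := by
  have hk0 : (0:ℝ) ≤ k := Nat.cast_nonneg k
  have hx0 : (0:ℝ) < x := by linarith
  have key : ∀ j ∈ Finset.range k,
      Real.Gamma (x/2) ≤ Real.Gamma (x/2 + (1 - ((j:ℝ)+1))/2) * x^k := by
    intro j hj
    have hjk : (j:ℝ) ≤ k := Nat.cast_le.2 (Finset.mem_range.1 hj).le
    have hj0 : (0:ℝ) ≤ j := Nat.cast_nonneg j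
    have hxj : (0:ℝ) < (x - j)/2 := by linarith
    rw [gterm_eq]
    calc Real.Gamma (x/2) ≤ Real.Gamma ((x - j)/2 + j) :=
          gamma_mono (by linarith) (by linarith)
      _ = Real.Gamma ((x - j)/2) * ∏ i ∈ Finset.range j, ((x - j)/2 + i) :=
          Gamma_add_nat hxj j
      _ ≤ Real.Gamma ((x - j)/2) * x^k := by
          refine mul_le_mul_of_nonneg_left ?_ (Real.Gamma_pos_of_pos hxj).le
          calc ∏ i ∈ Finset.range j, ((x - j)/2 + i)
              ≤ ∏ _i ∈ Finset.range j, x := by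
                refine Finset.prod_le_prod (fun i hi => ?_) (fun i hi => ?_)
                · have : (0:ℝ) ≤ i := Nat.cast_nonneg i
                  linarith
                · have hik : (i:ℝ) ≤ k := by
                    have : (i:ℝ) < j := Nat.cast_lt.2 (Finset.mem_range.1 hi)
                    linarith
                  linarith
            _ = x^j := by rw [Finset.prod_const, Finset.card_range]
            _ ≤ x^k := pow_le_pow_right₀ (by linarith) (Finset.mem_range.1 hj).le
  calc Real.Gamma (x/2)^k = ∏ j ∈ Finset.range k, Real.Gamma (x/2) := by
        rw [Finset.prod_const, Finset.card_range]
    _ ≤ ∏ j ∈ Finset.range k, (Real.Gamma (x/2 + (1 - ((j:ℝ)+1))/2) * x^k) :=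
        Finset.prod_le_prod (fun j _ => (Real.Gamma_pos_of_pos (by linarith)).le) key
    _ = (∏ j ∈ Finset.range k, Real.Gamma (x/2 + (1 - ((j:ℝ)+1))/2)) * x^(k*k) := by
        rw [Finset.prod_mul_distrib, Finset.prod_const, Finset.card_range, ← pow_mul]

noncomputable def cseq (k n : ℕ) : ℝ :=
  Real.Gamma ((n : ℝ) / 2) ^ k / multivariateGamma k ((n : ℝ) / 2)

noncomputable def eexp (k n : ℕ) : ℝ := ((n : ℝ) - k - 1) / 2

section Pieces

variable {k : ℕ} {A : Set (Matrix (Fin k) (Fin k) ℝ)}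

lemma multivariateGamma_pos {n : ℕ} (hn : k ≤ n) :
    0 < multivariateGamma k ((n : ℝ) / 2) := by
  unfold multivariateGamma
  refine mul_pos (Real.rpow_pos_of_pos Real.pi_pos _) (Finset.prod_pos fun j hj => ?_)
  refine Real.Gamma_pos_of_pos ?_
  have hjk : (j : ℝ) < k := Nat.cast_lt.2 (Finset.mem_range.1 hj)
  have hkn : (k : ℝ) ≤ n := Nat.cast_le.2 hn
  linarith

lemma cseq_pos {n : ℕ} (hn : k ≤ n) (hn1 : 1 ≤ n) : 0 < cseq k n := by
  unfold cseq
  refine div_pos (pow_pos (Real.Gamma_pos_of_pos ?_) k) (multivariateGamma_pos hn)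
  have : (1 : ℝ) ≤ n := Nat.one_le_cast.2 hn1
  linarith

lemma eexp_nonneg {n : ℕ} (hn : k + 1 ≤ n) : 0 ≤ eexp k n := by
  unfold eexp
  have : ((k : ℝ) + 1) ≤ n := by exact_mod_cast hn
  linarith

lemma integrableOn_detpow (hA : MeasurableSet A) (hAk : A ⊆ elliptope k)
    {n : ℕ} (hn : k + 1 ≤ n) :
    IntegrableOn (fun M => M.det ^ eexp k n) A (lambdaMeasure k) := by
  haveI : IsFiniteMeasure ((lambdaMeasure k).restrict A) :=
    ⟨by rw [Measure.restrict_apply_univ]; exact (lambda_fin hA hAk).lt_top⟩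
  refine Integrable.mono' (integrable_const ((k.factorial : ℝ) ^ eexp k n))
    (((Real.continuous_rpow_const (eexp_nonneg hn)).measurable.comp
      (measurable_det k)).aestronglyMeasurable) ?_
  filter_upwards [ae_restrict_mem hA] with M hM
  have h0 : 0 ≤ M.det := elliptope_det_nonneg (hAk hM)
  rw [Real.norm_eq_abs, abs_of_nonneg (Real.rpow_nonneg h0 _)]
  exact Real.rpow_le_rpow h0 (elliptope_det_le (hAk hM)) (eexp_nonneg hn)

lemma mu_eq (hA : MeasurableSet A) (hAk : A ⊆ elliptope k)
    {n : ℕ} (hn : k + 1 ≤ n) :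
    muMeasure k n A =
      ENNReal.ofReal ((∫ M in A, M.det ^ eexp k n ∂(lambdaMeasure k)) * cseq k n) := by
  have hdens : ∀ M ∈ A,
      ENNReal.ofReal (if M ∈ elliptope k then
        M.det ^ (((n : ℝ) - k - 1) / 2) *
          Real.Gamma ((n : ℝ) / 2) ^ k / multivariateGamma k ((n : ℝ) / 2)
      else 0) = ENNReal.ofReal (M.det ^ eexp k n * cseq k n) := by
    intro M hM
    rw [if_pos (hAk hM)]
    congr 1
    unfold cseq eexp
    ring
  rw [muMeasure, withDensity_apply _ hA]
  rw [setLIntegral_congr_fun hA hdens]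
  rw [← ofReal_integral_eq_lintegral_ofReal]
  · rw [integral_mul_const]
  · exact (integrableOn_detpow hA hAk hn).mul_const _
  · filter_upwards [ae_restrict_mem hA] with M hM
    have h0 : 0 ≤ M.det := elliptope_det_nonneg (hAk hM)
    have hc : 0 ≤ cseq k n := (cseq_pos (by omega) (by omega)).le
    exact mul_nonneg (Real.rpow_nonneg h0 _) hc

end Pieces

section Pieces2

variable {k : ℕ} {A : Set (Matrix (Fin k) (Fin k) ℝ)}

lemma F_nonneg (hAk : A ⊆ elliptope k) (M : Matrix (Fin k) (Fin k) ℝ) :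
    0 ≤ (A.indicator fun M => M.det) M :=
  Set.indicator_nonneg (fun x hx => elliptope_det_nonneg (hAk hx)) M

lemma F_le (hAk : A ⊆ elliptope k) (M : Matrix (Fin k) (Fin k) ℝ) :
    (A.indicator fun M => M.det) M ≤ (k.factorial : ℝ) := by
  classical
  by_cases h : M ∈ A
  · rw [Set.indicator_of_mem h]; exact elliptope_det_le (hAk h)
  · rw [Set.indicator_of_notMem h]; exact_mod_cast Nat.zero_le _

lemma F_bdd (hAk : A ⊆ elliptope k) : IsBoundedUnder (· ≤ ·) (ae (lambdaMeasure k))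
    (A.indicator fun M => M.det) :=
  isBoundedUnder_of ⟨(k.factorial : ℝ), fun M => F_le hAk M⟩

lemma F_cobdd (hk : 2 ≤ k) (hAk : A ⊆ elliptope k) :
    IsCoboundedUnder (· ≤ ·) (ae (lambdaMeasure k)) (A.indicator fun M => M.det) := by
  haveI : NeBot (ae (lambdaMeasure k)) := ae_neBot.2 (lambda_neZero hk)
  have hb : IsBoundedUnder (· ≥ ·) (ae (lambdaMeasure k)) (A.indicator fun M => M.det) :=
    isBoundedUnder_of ⟨(0:ℝ), fun M => F_nonneg hAk M⟩
  exact hb.isCoboundedUnder_le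

lemma S_nonneg (hk : 2 ≤ k) (hAk : A ⊆ elliptope k) :
    0 ≤ essSup (A.indicator fun M => M.det) (lambdaMeasure k) := by
  haveI : NeBot (ae (lambdaMeasure k)) := ae_neBot.2 (lambda_neZero hk)
  refine le_limsup_of_frequently_le ?_ (F_bdd hAk)
  exact Filter.Eventually.frequently (Filter.Eventually.of_forall fun M => F_nonneg hAk M)

lemma ae_le_S (hAk : A ⊆ elliptope k) : ∀ᵐ M ∂(lambdaMeasure k),
    (A.indicator fun M => M.det) M ≤
      essSup (A.indicator fun M => M.det) (lambdaMeasure k) :=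
  ae_le_essSup (F_bdd hAk)

lemma S_le_of_null (hk : 2 ≤ k) (hAk : A ⊆ elliptope k) {s : ℝ} (hs : 0 ≤ s)
    (h : lambdaMeasure k (A ∩ {M | s < M.det}) = 0) :
    essSup (A.indicator fun M => M.det) (lambdaMeasure k) ≤ s := by
  refine limsup_le_of_le (F_cobdd hk hAk) ?_
  have hae : ∀ᵐ M ∂(lambdaMeasure k), M ∉ (A ∩ {M | s < M.det}) :=
    (measure_eq_zero_iff_ae_notMem).1 h
  filter_upwards [hae] with M hM
  classical
  by_cases hMA : M ∈ A
  · rw [Set.indicator_of_mem hMA]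
    by_contra hcon
    exact hM ⟨hMA, by simpa using not_le.1 hcon⟩
  · rw [Set.indicator_of_notMem hMA]; exact hs

end Pieces2

section Pieces3

variable {k : ℕ} {A : Set (Matrix (Fin k) (Fin k) ℝ)}

lemma I_nonneg (hA : MeasurableSet A) (hAk : A ⊆ elliptope k) (n : ℕ) :
    0 ≤ ∫ M in A, M.det ^ eexp k n ∂(lambdaMeasure k) := by
  refine setIntegral_nonneg hA fun M hM => ?_
  exact Real.rpow_nonneg (elliptope_det_nonneg (hAk hM)) _

lemma I_le_upper (hk : 2 ≤ k) (hA : MeasurableSet A) (hAk : A ⊆ elliptope k)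
    {n : ℕ} (hn : k + 1 ≤ n) :
    ∫ M in A, M.det ^ eexp k n ∂(lambdaMeasure k) ≤
      ((lambdaMeasure k) A).toReal *
        (essSup (A.indicator fun M => M.det) (lambdaMeasure k)) ^ eexp k n := by
  set S := essSup (A.indicator fun M => M.det) (lambdaMeasure k) with hS
  haveI : IsFiniteMeasure ((lambdaMeasure k).restrict A) :=
    ⟨by rw [Measure.restrict_apply_univ]; exact (lambda_fin hA hAk).lt_top⟩
  have hmono : ∀ᵐ M ∂((lambdaMeasure k).restrict A),
      M.det ^ eexp k n ≤ S ^ eexp k n := by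
    filter_upwards [ae_restrict_mem hA, ae_restrict_of_ae (ae_le_S hAk)] with M hM hle
    rw [Set.indicator_of_mem hM] at hle
    exact Real.rpow_le_rpow (elliptope_det_nonneg (hAk hM)) hle (eexp_nonneg hn)
  calc ∫ M in A, M.det ^ eexp k n ∂(lambdaMeasure k)
      ≤ ∫ _M in A, S ^ eexp k n ∂(lambdaMeasure k) :=
        integral_mono_ae (integrableOn_detpow hA hAk hn) (integrable_const _) hmono
    _ = ((lambdaMeasure k) A).toReal * S ^ eexp k n := by
        rw [setIntegral_const, smul_eq_mul, measureReal_def]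

lemma I_ge_lower (hA : MeasurableSet A) (hAk : A ⊆ elliptope k)
    {s : ℝ} (hs : 0 < s) {n : ℕ} (hn : k + 1 ≤ n) :
    ((lambdaMeasure k) (A ∩ {M | s < M.det})).toReal * s ^ eexp k n ≤
      ∫ M in A, M.det ^ eexp k n ∂(lambdaMeasure k) := by
  set B := A ∩ {M | s < M.det} with hB
  have hBmeas : MeasurableSet B :=
    hA.inter ((measurable_det k) measurableSet_Ioi)
  haveI : IsFiniteMeasure ((lambdaMeasure k).restrict B) :=
    ⟨by
      rw [Measure.restrict_apply_univ]
      exact (ne_top_of_le_ne_top (lambda_fin hA hAk)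
        (measure_mono Set.inter_subset_left)).lt_top⟩
  have h1 : ∫ _M in B, s ^ eexp k n ∂(lambdaMeasure k) ≤
      ∫ M in B, M.det ^ eexp k n ∂(lambdaMeasure k) := by
    refine integral_mono_ae (integrable_const _)
      ((integrableOn_detpow hA hAk hn).mono_set Set.inter_subset_left) ?_
    filter_upwards [ae_restrict_mem hBmeas] with M hM
    exact Real.rpow_le_rpow hs.le hM.2.le (eexp_nonneg hn)
  have h2 : ∫ M in B, M.det ^ eexp k n ∂(lambdaMeasure k) ≤
      ∫ M in A, M.det ^ eexp k n ∂(lambdaMeasure k) := by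
    refine setIntegral_mono_set (integrableOn_detpow hA hAk hn) ?_
      (HasSubset.Subset.eventuallyLE Set.inter_subset_left)
    filter_upwards [ae_restrict_mem hA] with M hM
    exact Real.rpow_nonneg (elliptope_det_nonneg (hAk hM)) _
  calc ((lambdaMeasure k) B).toReal * s ^ eexp k n
      = ∫ _M in B, s ^ eexp k n ∂(lambdaMeasure k) := by
        rw [setIntegral_const, smul_eq_mul, measureReal_def]
    _ ≤ _ := h1.trans h2

end Pieces3

lemma prod_gammas_pos (k : ℕ) {n : ℕ} (hn : k ≤ n) :
    0 < ∏ j ∈ Finset.range k, Real.Gamma ((n:ℝ)/2 + (1 - ((j : ℝ) + 1)) / 2) := by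
  refine Finset.prod_pos fun j hj => Real.Gamma_pos_of_pos ?_
  have hjk : (j : ℝ) < k := Nat.cast_lt.2 (Finset.mem_range.1 hj)
  have hkn : (k : ℝ) ≤ n := Nat.cast_le.2 hn
  rw [gterm_eq]
  linarith

lemma log_cseq_bounds (k : ℕ) {n : ℕ} (hn : 2*k + 4 ≤ n) :
    (-(((k:ℝ) * ((k:ℝ) - 1))/4 * Real.log Real.pi) ≤ Real.log (cseq k n)) ∧
    Real.log (cseq k n) ≤
      ((k*k : ℕ) : ℝ) * Real.log n - ((k:ℝ) * ((k:ℝ) - 1))/4 * Real.log Real.pi := by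
  have hx : 2*(k:ℝ) + 4 ≤ (n:ℝ) := by exact_mod_cast hn
  have hkn : k ≤ n := by omega
  have hn1 : (1:ℝ) ≤ (n:ℝ) := by
    have : (1:ℕ) ≤ n := by omega
    exact_mod_cast this
  set x : ℝ := (n:ℝ) with hxdef
  set P := ∏ j ∈ Finset.range k, Real.Gamma (x/2 + (1 - ((j : ℝ) + 1)) / 2) with hP
  have hPpos : 0 < P := prod_gammas_pos k hkn
  have hG : 0 < Real.Gamma (x/2) := Real.Gamma_pos_of_pos (by linarith)
  set Q := Real.Gamma (x/2)^k / P with hQ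
  have hQ1 : 1 ≤ Q := (one_le_div hPpos).2 (gpart_lower k hx)
  have hQle : Q ≤ x^(k*k) := (div_le_iff₀ hPpos).2 (by
    rw [mul_comm]
    exact gpart_upper k hx)
  have hcseq : cseq k n = Q / Real.pi ^ (((k:ℝ) * ((k:ℝ) - 1))/4) := by
    unfold cseq multivariateGamma
    rw [hQ, hP]
    have hpi : (0:ℝ) < Real.pi ^ (((k:ℝ) * ((k:ℝ) - 1))/4) :=
      Real.rpow_pos_of_pos Real.pi_pos _
    field_simp
    ring
  have hlog : Real.log (cseq k n) =
      Real.log Q - ((k:ℝ) * ((k:ℝ) - 1))/4 * Real.log Real.pi := by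
    rw [hcseq, Real.log_div (by positivity) (by positivity), Real.log_rpow Real.pi_pos]
  constructor
  · rw [hlog]
    have : 0 ≤ Real.log Q := Real.log_nonneg hQ1
    linarith
  · rw [hlog]
    have h1 : Real.log Q ≤ Real.log (x^(k*k)) :=
      Real.log_le_log (by positivity) hQle
    rw [Real.log_pow] at h1
    linarith

lemma tendsto_inv_mul_log_nat :
    Tendsto (fun n : ℕ => ((n:ℝ))⁻¹ * Real.log n) atTop (nhds 0) := by
  have h := Real.isLittleO_log_id_atTop.tendsto_div_nhds_zero
  have h2 := h.comp tendsto_natCast_atTop_atTop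
  refine h2.congr fun n => ?_
  simp [Function.comp, div_eq_mul_inv, mul_comm]

lemma tendsto_log_cseq (k : ℕ) :
    Tendsto (fun n : ℕ => ((n:ℝ))⁻¹ * Real.log (cseq k n)) atTop (nhds 0) := by
  set C := ((k:ℝ) * ((k:ℝ) - 1))/4 * Real.log Real.pi with hC
  have hlo : Tendsto (fun n : ℕ => ((n:ℝ))⁻¹ * (-C)) atTop (nhds 0) := by
    simpa using tendsto_inv_atTop_nhds_zero_nat.mul_const (-C)
  have hhi : Tendsto (fun n : ℕ => ((n:ℝ))⁻¹ * (((k*k : ℕ) : ℝ) * Real.log n - C))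
      atTop (nhds 0) := by
    have : (fun n : ℕ => ((n:ℝ))⁻¹ * (((k*k : ℕ) : ℝ) * Real.log n - C)) =
        fun n : ℕ => ((k*k : ℕ) : ℝ) * (((n:ℝ))⁻¹ * Real.log n) - ((n:ℝ))⁻¹ * C := by
      funext n; ring
    rw [this]
    have := (tendsto_inv_mul_log_nat.const_mul (((k*k : ℕ) : ℝ))).sub
      (tendsto_inv_atTop_nhds_zero_nat.mul_const C)
    simpa using this
  refine tendsto_of_tendsto_of_tendsto_of_le_of_le' hlo hhi ?_ ?_
  · filter_upwards [eventually_ge_atTop (2*k+4)] with n hn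
    have := (log_cseq_bounds k hn).1
    have hnn : (0:ℝ) ≤ ((n:ℝ))⁻¹ := by positivity
    exact mul_le_mul_of_nonneg_left this hnn
  · filter_upwards [eventually_ge_atTop (2*k+4)] with n hn
    have := (log_cseq_bounds k hn).2
    have hnn : (0:ℝ) ≤ ((n:ℝ))⁻¹ := by positivity
    exact mul_le_mul_of_nonneg_left this hnn

lemma tendsto_eexp_div (k : ℕ) :
    Tendsto (fun n : ℕ => eexp k n * ((n:ℝ))⁻¹) atTop (nhds (1/2)) := by
  have h : Tendsto (fun n : ℕ => (1 - ((k:ℝ) + 1) * ((n:ℝ))⁻¹)/2) atTop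
      (nhds ((1 - ((k:ℝ) + 1) * 0)/2)) := by
    exact ((tendsto_const_nhds.sub
      (tendsto_inv_atTop_nhds_zero_nat.const_mul _)).div_const 2)
  have h2 : ((1 : ℝ) - ((k:ℝ) + 1) * 0)/2 = 1/2 := by ring
  rw [h2] at h
  refine h.congr' ?_
  filter_upwards [eventually_ge_atTop 1] with n hn
  have hn0 : ((n:ℝ)) ≠ 0 := by
    have : (1:ℝ) ≤ (n:ℝ) := by exact_mod_cast hn
    linarith
  unfold eexp
  field_simp
  ring


/-- Large deviation principle on the sphere: for Borel `A ⊆ 𝓜_k`,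
`n⁻¹ ln μ_{k,n}(A) → (1/2) ln ‖1_A · det‖_∞`. -/
theorem large_deviation_sphere (k : ℕ) (hk : 2 ≤ k)
    (A : Set (Matrix (Fin k) (Fin k) ℝ)) (hA : MeasurableSet A)
    (hAk : A ⊆ elliptope k) :
    Tendsto (fun n : ℕ => (n : ℝ)⁻¹ * Real.log ((muMeasure k n A).toReal))
      atTop
      (nhds ((1 / 2) *
        Real.log (essSup (A.indicator fun M => M.det) (lambdaMeasure k)))) := by
  set S := essSup (A.indicator fun M => M.det) (lambdaMeasure k) with hSdef
  have hS0 : 0 ≤ S := S_nonneg hk hAk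
  rcases eq_or_lt_of_le hS0 with hS | hSpos
  · -- degenerate case S = 0
    have hFzero : ∀ᵐ M ∂(lambdaMeasure k), (A.indicator fun M => M.det) M = 0 := by
      filter_upwards [ae_le_S hAk] with M h1
      exact le_antisymm (by rw [← hSdef, ← hS] at h1; exact h1) (F_nonneg hAk M)
    have hmu : ∀ n : ℕ, k + 2 ≤ n → muMeasure k n A = 0 := by
      intro n hn
      rw [muMeasure, withDensity_apply _ hA]
      have hzero : ∀ᵐ M ∂(lambdaMeasure k), M ∈ A →
          ENNReal.ofReal
            (if M ∈ elliptope k then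
              M.det ^ (((n : ℝ) - k - 1) / 2) *
                Real.Gamma ((n : ℝ) / 2) ^ k / multivariateGamma k ((n : ℝ) / 2)
            else 0) = 0 := by
        filter_upwards [hFzero] with M hM hMA
        rw [Set.indicator_of_mem hMA] at hM
        rw [if_pos (hAk hMA), hM]
        have he : (((n : ℝ) - k - 1) / 2) ≠ 0 := by
          have : ((k:ℝ) + 2) ≤ (n:ℝ) := by exact_mod_cast hn
          intro hcon
          have : ((n:ℝ) - k - 1) = 0 := by
            field_simp at hcon; linarith [hcon]
          linarith
        rw [Real.zero_rpow he]
        simp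
      calc ∫⁻ M in A, ENNReal.ofReal
            (if M ∈ elliptope k then
              M.det ^ (((n : ℝ) - k - 1) / 2) *
                Real.Gamma ((n : ℝ) / 2) ^ k / multivariateGamma k ((n : ℝ) / 2)
            else 0) ∂(lambdaMeasure k)
          = ∫⁻ _M in A, 0 ∂(lambdaMeasure k) :=
            setLIntegral_congr_fun_ae hA hzero
        _ = 0 := lintegral_zero
    rw [← hS, Real.log_zero, mul_zero]
    refine Tendsto.congr' ?_ tendsto_const_nhds
    filter_upwards [eventually_ge_atTop (k+2)] with n hn
    rw [hmu n hn]
    simp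
  · -- main case S > 0
    have hmeaspos : ∀ s : ℝ, 0 < s → s < S →
        0 < ((lambdaMeasure k) (A ∩ {M | s < M.det})).toReal := by
      intro s hs hsS
      refine ENNReal.toReal_pos ?_ ?_
      · intro h0
        exact absurd (S_le_of_null hk hAk hs.le h0) (not_le.2 hsS)
      · exact ne_top_of_le_ne_top (lambda_fin hA hAk) (measure_mono Set.inter_subset_left)
    have hIpos : ∀ n : ℕ, k + 1 ≤ n →
        0 < ∫ M in A, M.det ^ eexp k n ∂(lambdaMeasure k) := by
      intro n hn
      have hm := hmeaspos (S/2) (by linarith) (by linarith)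
      have := I_ge_lower hA hAk (show (0:ℝ) < S/2 by linarith) hn
      have hpow : (0:ℝ) < (S/2) ^ eexp k n := Real.rpow_pos_of_pos (by linarith) _
      nlinarith
    have hlApos : 0 < ((lambdaMeasure k) A).toReal := by
      have h1 := hmeaspos (S/2) (by linarith) (by linarith)
      have h2 : ((lambdaMeasure k) (A ∩ {M | S/2 < M.det})).toReal ≤
          ((lambdaMeasure k) A).toReal := by
        refine ENNReal.toReal_mono (lambda_fin hA hAk) (measure_mono Set.inter_subset_left)
      linarith
    set lA := ((lambdaMeasure k) A).toReal with hlA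
    -- identity for the sequence
    have hLn : ∀ n : ℕ, 2*k + 4 ≤ n →
        (n : ℝ)⁻¹ * Real.log ((muMeasure k n A).toReal) =
          (n : ℝ)⁻¹ * (Real.log (∫ M in A, M.det ^ eexp k n ∂(lambdaMeasure k)) +
            Real.log (cseq k n)) := by
      intro n hn
      have hn1 : k + 1 ≤ n := by omega
      have hc : 0 < cseq k n := cseq_pos (by omega) (by omega)
      have hI := hIpos n hn1
      rw [mu_eq hA hAk hn1, ENNReal.toReal_ofReal (by positivity),
        Real.log_mul (ne_of_gt hI) (ne_of_gt hc)]
    -- upper comparison sequence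
    set U : ℕ → ℝ := fun n => (n : ℝ)⁻¹ * Real.log (cseq k n) +
      (eexp k n * (n : ℝ)⁻¹) * Real.log S + (n : ℝ)⁻¹ * Real.log lA with hU
    have hUtend : Tendsto U atTop (nhds ((1/2) * Real.log S)) := by
      have t1 := tendsto_log_cseq k
      have t2 := (tendsto_eexp_div k).mul_const (Real.log S)
      have t3 := tendsto_inv_atTop_nhds_zero_nat.mul_const (Real.log lA)
      have := (t1.add t2).add t3
      simpa using this
    have hLU : ∀ᶠ n : ℕ in atTop, (n : ℝ)⁻¹ *
        Real.log ((muMeasure k n A).toReal) ≤ U n := by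
      filter_upwards [eventually_ge_atTop (2*k+4)] with n hn
      have hn1 : k + 1 ≤ n := by omega
      have hI := hIpos n hn1
      have hlogI : Real.log (∫ M in A, M.det ^ eexp k n ∂(lambdaMeasure k)) ≤
          Real.log lA + eexp k n * Real.log S := by
        have h1 := I_le_upper hk hA hAk hn1
        have h2 : Real.log (∫ M in A, M.det ^ eexp k n ∂(lambdaMeasure k)) ≤
            Real.log (lA * S ^ eexp k n) := Real.log_le_log hI h1
        rwa [Real.log_mul (ne_of_gt hlApos)
          (ne_of_gt (Real.rpow_pos_of_pos hSpos _)), Real.log_rpow hSpos] at h2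
      rw [hLn n hn, hU]
      have hnn : (0:ℝ) ≤ ((n:ℝ))⁻¹ := by positivity
      have := mul_le_mul_of_nonneg_left
        (add_le_add_left hlogI (Real.log (cseq k n))) hnn
      calc (n : ℝ)⁻¹ * (Real.log (∫ M in A, M.det ^ eexp k n ∂(lambdaMeasure k)) +
            Real.log (cseq k n))
          ≤ (n : ℝ)⁻¹ * ((Real.log lA + eexp k n * Real.log S) + Real.log (cseq k n)) := this
        _ = (n : ℝ)⁻¹ * Real.log (cseq k n) +
            (eexp k n * (n : ℝ)⁻¹) * Real.log S + (n : ℝ)⁻¹ * Real.log lA := by ring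
    refine tendsto_order.2 ⟨?_, ?_⟩
    · -- lower bound branch
      intro a ha
      set b := (a + (1/2) * Real.log S) / 2 with hb
      have hab : a < b := by
        rw [hb]; linarith
      have hbl : b < (1/2) * Real.log S := by
        rw [hb]; linarith
      set s : ℝ := Real.exp (2*b) with hs
      have hs0 : 0 < s := Real.exp_pos _
      have hsS : s < S := by
        have h2b : 2*b < Real.log S := by linarith
        calc s < Real.exp (Real.log S) := Real.exp_lt_exp.2 h2b
          _ = S := Real.exp_log hSpos
      have hm := hmeaspos s hs0 hsS
      set m := ((lambdaMeasure k) (A ∩ {M | s < M.det})).toReal with hmdef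
      set W : ℕ → ℝ := fun n => (n : ℝ)⁻¹ * Real.log (cseq k n) +
        (eexp k n * (n : ℝ)⁻¹) * Real.log s + (n : ℝ)⁻¹ * Real.log m with hW
      have hWtend : Tendsto W atTop (nhds b) := by
        have t1 := tendsto_log_cseq k
        have t2 := (tendsto_eexp_div k).mul_const (Real.log s)
        have t3 := tendsto_inv_atTop_nhds_zero_nat.mul_const (Real.log m)
        have h4 := (t1.add t2).add t3
        have h5 : (0:ℝ) + (1/2) * Real.log s + 0 * Real.log m = b := by
          rw [hs, Real.log_exp]; ring
        rw [← h5]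
        exact h4
      have hWL : ∀ᶠ n : ℕ in atTop, W n ≤ (n : ℝ)⁻¹ *
          Real.log ((muMeasure k n A).toReal) := by
        filter_upwards [eventually_ge_atTop (2*k+4)] with n hn
        have hn1 : k + 1 ≤ n := by omega
        have hI := hIpos n hn1
        have hlogI : Real.log m + eexp k n * Real.log s ≤
            Real.log (∫ M in A, M.det ^ eexp k n ∂(lambdaMeasure k)) := by
          have h1 := I_ge_lower hA hAk hs0 hn1
          have h2 : Real.log (m * s ^ eexp k n) ≤
              Real.log (∫ M in A, M.det ^ eexp k n ∂(lambdaMeasure k)) :=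
            Real.log_le_log (by positivity) h1
          rwa [Real.log_mul (ne_of_gt hm)
            (ne_of_gt (Real.rpow_pos_of_pos hs0 _)), Real.log_rpow hs0] at h2
        rw [hLn n hn, hW]
        have hnn : (0:ℝ) ≤ ((n:ℝ))⁻¹ := by positivity
        have := mul_le_mul_of_nonneg_left
          (add_le_add_left hlogI (Real.log (cseq k n))) hnn
        calc (n : ℝ)⁻¹ * Real.log (cseq k n) +
              (eexp k n * (n : ℝ)⁻¹) * Real.log s + (n : ℝ)⁻¹ * Real.log m
            = (n : ℝ)⁻¹ * ((Real.log m + eexp k n * Real.log s) + Real.log (cseq k n)) := by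
              ring
          _ ≤ _ := this
      have hWgt : ∀ᶠ n : ℕ in atTop, a < W n := (tendsto_order.1 hWtend).1 a hab
      filter_upwards [hWgt, hWL] with n h1 h2
      exact lt_of_lt_of_le h1 h2
    · intro a ha
      have hUlt : ∀ᶠ n : ℕ in atTop, U n < a := (tendsto_order.1 hUtend).2 a ha
      filter_upwards [hUlt, hLU] with n h1 h2
      exact lt_of_le_of_lt h2 h1
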